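/- Let λ > 0 and p ∈ ℕ. For j ∈ {1, …, 2p} set ε_j = 1 if j is even and ε_j = −1 if j is odd, and let S_p denote the set of all permutations of {1, …, p}. Then there exists a constant C = C(p, λ) > 0 such that for every N ∈ ℕ and all points y₁, …, y_{2p} ∈ T²: ∏_{1 ≤ j < k ≤ 2p} (|y_j − y_k| + N^{−1})^{ε_j ε_k λ} ≤ C · max_{τ ∈ S_p} ∏_{j=1}^{p} (|y_{2j} − y_{2τ(j)−1}| + N^{−1})^{−λ}. -/

import Mathlib

open scoped Real

/-- Euclidean norm on `ℝ²`. -/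
noncomputable def enorm2 (x : ℝ × ℝ) : ℝ := Real.sqrt (x.1 ^ 2 + x.2 ^ 2)

/-- The quotient (torus) norm on `T² = (ℝ/2πℤ)²`. -/
noncomputable def torusNorm2 (x : ℝ × ℝ) : ℝ :=
  ⨅ m : ℤ × ℤ, enorm2 (x.1 - 2 * π * (m.1 : ℝ), x.2 - 2 * π * (m.2 : ℝ))

/-- The quotient (torus) distance on `T² = (ℝ/2πℤ)²`. -/
noncomputable def torusDist2 (x y : ℝ × ℝ) : ℝ := torusNorm2 (x.1 - y.1, x.2 - y.2)

/-- The charge `ε_j` of the point `y_j`: `+1` for even `j` and `-1` for odd `j`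
(in the paper's `1`-based indexing; here `i : Fin (2p)` corresponds to `j = i + 1`). -/
noncomputable def charge {m : ℕ} (i : Fin m) : ℝ := if (i : ℕ) % 2 = 1 then 1 else -1

lemma enorm2_nonneg (x : ℝ × ℝ) : 0 ≤ enorm2 x := Real.sqrt_nonneg _

lemma enorm2_add_le (a b c d : ℝ) :
    enorm2 (a + c, b + d) ≤ enorm2 (a, b) + enorm2 (c, d) := by
  unfold enorm2
  have h1 : a * c + b * d ≤ Real.sqrt ((a ^ 2 + b ^ 2) * (c ^ 2 + d ^ 2)) := by
    have h2 : (a * c + b * d) ^ 2 ≤ (a ^ 2 + b ^ 2) * (c ^ 2 + d ^ 2) := by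
      nlinarith [sq_nonneg (a * d - b * c)]
    calc a * c + b * d ≤ |a * c + b * d| := le_abs_self _
    _ = Real.sqrt ((a * c + b * d) ^ 2) := (Real.sqrt_sq_eq_abs _).symm
    _ ≤ _ := Real.sqrt_le_sqrt h2
  have h3 : (a + c) ^ 2 + (b + d) ^ 2
      ≤ (Real.sqrt (a ^ 2 + b ^ 2) + Real.sqrt (c ^ 2 + d ^ 2)) ^ 2 := by
    have e1 : Real.sqrt (a ^ 2 + b ^ 2) ^ 2 = a ^ 2 + b ^ 2 :=
      Real.sq_sqrt (by positivity)
    have e2 : Real.sqrt (c ^ 2 + d ^ 2) ^ 2 = c ^ 2 + d ^ 2 :=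
      Real.sq_sqrt (by positivity)
    have e3 : Real.sqrt (a ^ 2 + b ^ 2) * Real.sqrt (c ^ 2 + d ^ 2)
        = Real.sqrt ((a ^ 2 + b ^ 2) * (c ^ 2 + d ^ 2)) :=
      (Real.sqrt_mul (by positivity) _).symm
    nlinarith [h1]
  calc Real.sqrt ((a + c) ^ 2 + (b + d) ^ 2)
      ≤ Real.sqrt ((Real.sqrt (a ^ 2 + b ^ 2) + Real.sqrt (c ^ 2 + d ^ 2)) ^ 2) :=
        Real.sqrt_le_sqrt h3
    _ = _ := Real.sqrt_sq (by positivity)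

lemma enorm2_neg (a b : ℝ) : enorm2 (-a, -b) = enorm2 (a, b) := by
  unfold enorm2; ring_nf

lemma torusNorm2_bddBelow (x : ℝ × ℝ) :
    BddBelow (Set.range fun m : ℤ × ℤ =>
      enorm2 (x.1 - 2 * π * (m.1 : ℝ), x.2 - 2 * π * (m.2 : ℝ))) :=
  ⟨0, by rintro _ ⟨m, rfl⟩; exact enorm2_nonneg _⟩

lemma torusDist2_nonneg (x y : ℝ × ℝ) : 0 ≤ torusDist2 x y :=
  Real.iInf_nonneg fun _ => enorm2_nonneg _

lemma torusDist2_symm (x y : ℝ × ℝ) : torusDist2 x y = torusDist2 y x := by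
  unfold torusDist2 torusNorm2
  apply le_antisymm
  · apply le_ciInf
    intro n
    have h := ciInf_le (torusNorm2_bddBelow (x.1 - y.1, x.2 - y.2)) (-n)
    refine h.trans_eq ?_
    simp only [Prod.fst_neg, Prod.snd_neg, Int.cast_neg]
    rw [show x.1 - y.1 - 2 * π * (-(n.1:ℝ)) = -(y.1 - x.1 - 2*π*(n.1:ℝ)) by ring,
      show x.2 - y.2 - 2 * π * (-(n.2:ℝ)) = -(y.2 - x.2 - 2*π*(n.2:ℝ)) by ring]
    exact enorm2_neg _ _
  · apply le_ciInf
    intro n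
    have h := ciInf_le (torusNorm2_bddBelow (y.1 - x.1, y.2 - x.2)) (-n)
    refine h.trans_eq ?_
    simp only [Prod.fst_neg, Prod.snd_neg, Int.cast_neg]
    rw [show y.1 - x.1 - 2 * π * (-(n.1:ℝ)) = -(x.1 - y.1 - 2*π*(n.1:ℝ)) by ring,
      show y.2 - x.2 - 2 * π * (-(n.2:ℝ)) = -(x.2 - y.2 - 2*π*(n.2:ℝ)) by ring]
    exact enorm2_neg _ _

lemma torusDist2_triangle (x y z : ℝ × ℝ) :
    torusDist2 x z ≤ torusDist2 x y + torusDist2 y z := by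
  unfold torusDist2 torusNorm2
  apply le_ciInf_add_ciInf
  intro m n
  have h := ciInf_le (torusNorm2_bddBelow (x.1 - z.1, x.2 - z.2)) (m + n)
  refine h.trans ?_
  have e1 : x.1 - z.1 - 2 * π * (((m + n).1 : ℤ) : ℝ)
      = (x.1 - y.1 - 2 * π * (m.1 : ℝ)) + (y.1 - z.1 - 2 * π * (n.1 : ℝ)) := by
    push_cast [Prod.fst_add]; ring
  have e2 : x.2 - z.2 - 2 * π * (((m + n).2 : ℤ) : ℝ)
      = (x.2 - y.2 - 2 * π * (m.2 : ℝ)) + (y.2 - z.2 - 2 * π * (n.2 : ℝ)) := by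
    push_cast [Prod.snd_add]; ring
  rw [e1, e2]
  exact enorm2_add_le _ _ _ _


section Key

variable {α : Type*}

lemma double_prod_split {p : ℕ} (G : Fin (p + 1) → Fin (p + 1) → ℝ)
    (j₀ k₀ : Fin (p + 1)) :
    (∏ j, ∏ k, G j k)
      = G j₀ k₀ * (∏ k : Fin p, G j₀ (k₀.succAbove k))
          * (∏ j : Fin p, G (j₀.succAbove j) k₀)
          * ∏ j : Fin p, ∏ k : Fin p, G (j₀.succAbove j) (k₀.succAbove k) := by
  rw [Fin.prod_univ_succAbove (fun j => ∏ k, G j k) j₀,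
    Fin.prod_univ_succAbove (fun k => G j₀ k) k₀]
  have h : ∀ j : Fin p, (∏ k, G (j₀.succAbove j) k)
      = G (j₀.succAbove j) k₀ * ∏ k : Fin p, G (j₀.succAbove j) (k₀.succAbove k) :=
    fun j => Fin.prod_univ_succAbove (fun k => G (j₀.succAbove j) k) k₀
  rw [Finset.prod_congr rfl (fun j _ => h j), Finset.prod_mul_distrib]
  ring

lemma double_prod_split_diag {p : ℕ} (F : Fin (p + 1) → Fin (p + 1) → ℝ)
    (j₀ : Fin (p + 1)) :
    (∏ j, ∏ k, if j = k then 1 else F j k)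
      = (∏ k : Fin p, F j₀ (j₀.succAbove k))
          * (∏ j : Fin p, F (j₀.succAbove j) j₀)
          * ∏ j : Fin p, ∏ k : Fin p,
              (if j = k then 1 else F (j₀.succAbove j) (j₀.succAbove k)) := by
  rw [double_prod_split (fun j k => if j = k then 1 else F j k) j₀ j₀]
  have h0 : (if j₀ = j₀ then (1 : ℝ) else F j₀ j₀) = 1 := if_pos rfl
  have e1 : (∏ k : Fin p, if j₀ = j₀.succAbove k then (1:ℝ) else F j₀ (j₀.succAbove k))
      = ∏ k : Fin p, F j₀ (j₀.succAbove k) :=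
    Finset.prod_congr rfl fun k _ => if_neg (Ne.symm (Fin.succAbove_ne j₀ k))
  have e2 : (∏ j : Fin p, if j₀.succAbove j = j₀ then (1:ℝ) else F (j₀.succAbove j) j₀)
      = ∏ j : Fin p, F (j₀.succAbove j) j₀ :=
    Finset.prod_congr rfl fun j _ => if_neg (Fin.succAbove_ne j₀ j)
  have e3 : (∏ j : Fin p, ∏ k : Fin p,
        if j₀.succAbove j = j₀.succAbove k then (1:ℝ)
        else F (j₀.succAbove j) (j₀.succAbove k))
      = ∏ j : Fin p, ∏ k : Fin p,
          (if j = k then 1 else F (j₀.succAbove j) (j₀.succAbove k)) := by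
    refine Finset.prod_congr rfl fun j _ => Finset.prod_congr rfl fun k _ => ?_
    by_cases h : j = k
    · subst h; simp
    · rw [if_neg h, if_neg (fun hc => h ((Fin.succAbove_right_inj).mp hc))]
  rw [h0, e1, e2, e3, one_mul]

lemma final_algebra (A1 A2 Ar B1 B2 Br g0 X1 X2 Xr S' S C c : ℝ)
    (hC : 0 < C) (hc : 0 ≤ c) (hA1 : 0 ≤ A1) (hA2 : 0 ≤ A2) (hB1 : 0 ≤ B1) (hB2 : 0 ≤ B2)
    (hg0 : 0 ≤ g0) (hS' : 0 ≤ S')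
    (h1 : Ar * Br * Xr ^ 2 ≤ C * S' ^ 2) (h2 : A1 * A2 * X2 ^ 2 ≤ c)
    (h3 : B1 * B2 * X1 ^ 2 ≤ c) (h4 : g0 * S' ≤ S) :
    A1 * A2 * Ar * (B1 * B2 * Br) * (g0 * X1 * X2 * Xr) ^ 2 ≤ C * (c * c) * S ^ 2 := by
  have hPAnn : 0 ≤ A1 * A2 * X2 ^ 2 := by positivity
  have hPBnn : 0 ≤ B1 * B2 * X1 ^ 2 := by positivity
  calc A1 * A2 * Ar * (B1 * B2 * Br) * (g0 * X1 * X2 * Xr) ^ 2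
      = (Ar * Br * Xr ^ 2) * (g0 ^ 2 * ((A1 * A2 * X2 ^ 2) * (B1 * B2 * X1 ^ 2))) := by ring
    _ ≤ (C * S' ^ 2) * (g0 ^ 2 * (c * c)) := by
        apply mul_le_mul h1 _ (by positivity) (by positivity)
        exact mul_le_mul_of_nonneg_left (mul_le_mul h2 h3 hPBnn hc) (sq_nonneg g0)
    _ = (C * (c * c)) * (g0 * S') ^ 2 := by ring
    _ ≤ (C * (c * c)) * S ^ 2 := by
        apply mul_le_mul_of_nonneg_left _ (by positivity)
        exact pow_le_pow_left₀ (mul_nonneg hg0 hS') h4 2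

set_option maxHeartbeats 1000000 in
lemma key_lemma (d : α → α → ℝ) (hd0 : ∀ x y, 0 ≤ d x y)
    (hsymm : ∀ x y, d x y = d y x)
    (htri : ∀ x y z, d x z ≤ d x y + d y z)
    (μ : ℝ) (hμ : 0 < μ) :
    ∀ p : ℕ, ∃ C : ℝ, 0 < C ∧ ∀ δ : ℝ, 0 < δ → ∀ a b : Fin p → α,
      (∏ j, ∏ k, if j = k then 1 else (d (a j) (a k) + δ) ^ μ) *
      (∏ j, ∏ k, if j = k then 1 else (d (b j) (b k) + δ) ^ μ) *
      (∏ j, ∏ k, (d (a j) (b k) + δ) ^ (-μ)) ^ 2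
      ≤ C * (⨆ τ : Equiv.Perm (Fin p), ∏ j, (d (b j) (a (τ j)) + δ) ^ (-μ)) ^ 2 := by
  intro p
  induction p with
  | zero =>
    refine ⟨1, one_pos, ?_⟩
    intro δ hδ a b
    simp [ciSup_const]
  | succ p ih =>
    obtain ⟨C, hC, hrec⟩ := ih
    refine ⟨C * ((4 : ℝ) ^ μ) ^ (2 * p), by positivity, ?_⟩
    intro δ hδ a b
    have hg : ∀ x y : α, 0 < d x y + δ := fun x y => add_pos_of_nonneg_of_pos (hd0 x y) hδ
    obtain ⟨w, -, hw⟩ := Finset.exists_min_image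
      (Finset.univ : Finset (Fin (p + 1) × Fin (p + 1)))
      (fun w => d (a w.1) (b w.2)) ⟨(0, 0), Finset.mem_univ _⟩
    obtain ⟨j₀, k₀⟩ := w
    have hmin : ∀ j k, d (a j₀) (b k₀) ≤ d (a j) (b k) := fun j k => hw (j, k) (Finset.mem_univ _)
    have hg₀ : 0 < d (a j₀) (b k₀) + δ := hg _ _
    -- comparison bounds
    have hu : ∀ j : Fin p, d (a (j₀.succAbove j)) (a j₀) + δ
        ≤ 2 * (d (a (j₀.succAbove j)) (b k₀) + δ) := by
      intro j
      have h1 := htri (a (j₀.succAbove j)) (b k₀) (a j₀)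
      have h2 : d (b k₀) (a j₀) = d (a j₀) (b k₀) := hsymm _ _
      have h3 := hmin (j₀.succAbove j) k₀
      linarith [hδ.le]
    have hu' : ∀ j : Fin p, d (a j₀) (a (j₀.succAbove j)) + δ
        ≤ 2 * (d (a (j₀.succAbove j)) (b k₀) + δ) := by
      intro j; rw [hsymm (a j₀) (a (j₀.succAbove j))]; exact hu j
    have hv : ∀ k : Fin p, d (b (k₀.succAbove k)) (b k₀) + δ
        ≤ 2 * (d (a j₀) (b (k₀.succAbove k)) + δ) := by
      intro k
      have h1 := htri (b (k₀.succAbove k)) (a j₀) (b k₀)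
      have h2 : d (b (k₀.succAbove k)) (a j₀) = d (a j₀) (b (k₀.succAbove k)) := hsymm _ _
      have h3 := hmin j₀ (k₀.succAbove k)
      linarith [hδ.le]
    have hv' : ∀ k : Fin p, d (b k₀) (b (k₀.succAbove k)) + δ
        ≤ 2 * (d (a j₀) (b (k₀.succAbove k)) + δ) := by
      intro k; rw [hsymm (b k₀) (b (k₀.succAbove k))]; exact hv k
    -- decompositions
    have hA := double_prod_split_diag (fun j k => (d (a j) (a k) + δ) ^ μ) j₀
    have hB := double_prod_split_diag (fun j k => (d (b j) (b k) + δ) ^ μ) k₀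
    have hX := double_prod_split (fun j k => (d (a j) (b k) + δ) ^ (-μ)) j₀ k₀
    have key4 : ∀ u : ℝ, 0 < u → (2 * u) ^ μ * (2 * u) ^ μ * (u ^ (-μ)) ^ 2 = (4 : ℝ) ^ μ := by
      intro u hu0
      have hm : (2 * u) ^ μ = 2 ^ μ * u ^ μ := Real.mul_rpow (by norm_num) hu0.le
      have huμ : u ^ μ * u ^ (-μ) = 1 := by
        rw [← Real.rpow_add hu0]; simp
      have h22 : (2:ℝ) ^ μ * 2 ^ μ = 4 ^ μ := by
        rw [← Real.mul_rpow (by norm_num) (by norm_num)]; norm_num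
      calc (2 * u) ^ μ * (2 * u) ^ μ * (u ^ (-μ)) ^ 2
          = (2 ^ μ * 2 ^ μ) * ((u ^ μ * u ^ (-μ)) * (u ^ μ * u ^ (-μ))) := by
            rw [hm, pow_two]; ring
        _ = (4:ℝ) ^ μ := by rw [huμ, h22]; ring
    -- per-index bound
    have keybd : ∀ X Y u : ℝ, 0 < u → X + δ ≤ 2 * u → Y + δ ≤ 2 * u → 0 ≤ X → 0 ≤ Y →
        (X + δ) ^ μ * (Y + δ) ^ μ * (u ^ (-μ)) ^ 2 ≤ (4:ℝ) ^ μ := by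
      intro X Y u hu0 hXu hYu hX0 hY0
      have hXp : (0:ℝ) < X + δ := by linarith
      have hYp : (0:ℝ) < Y + δ := by linarith
      have hU : (0:ℝ) ≤ (2 * u) ^ μ := Real.rpow_nonneg (by linarith) μ
      have b1 : (X + δ) ^ μ ≤ (2 * u) ^ μ := Real.rpow_le_rpow hXp.le hXu hμ.le
      have b2 : (Y + δ) ^ μ ≤ (2 * u) ^ μ := Real.rpow_le_rpow hYp.le hYu hμ.le
      calc (X + δ) ^ μ * (Y + δ) ^ μ * (u ^ (-μ)) ^ 2
          ≤ (2 * u) ^ μ * (2 * u) ^ μ * (u ^ (-μ)) ^ 2 := by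
            apply mul_le_mul _ le_rfl (sq_nonneg _) (mul_nonneg hU hU)
            exact mul_le_mul b1 b2 (Real.rpow_nonneg hYp.le μ) hU
        _ = (4:ℝ) ^ μ := key4 u hu0
    have hPA : (∏ k : Fin p, (d (a j₀) (a (j₀.succAbove k)) + δ) ^ μ)
          * (∏ j : Fin p, (d (a (j₀.succAbove j)) (a j₀) + δ) ^ μ)
          * (∏ j : Fin p, (d (a (j₀.succAbove j)) (b k₀) + δ) ^ (-μ)) ^ 2
        ≤ ((4 : ℝ) ^ μ) ^ p := by
      rw [← Finset.prod_pow, ← Finset.prod_mul_distrib, ← Finset.prod_mul_distrib]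
      calc _ ≤ ∏ _j : Fin p, (4:ℝ) ^ μ := by
            apply Finset.prod_le_prod
            · intro j _
              exact mul_nonneg (mul_nonneg (Real.rpow_nonneg (hg _ _).le μ)
                (Real.rpow_nonneg (hg _ _).le μ)) (sq_nonneg _)
            · intro j _
              exact keybd _ _ _ (hg (a (j₀.succAbove j)) (b k₀)) (hu' j) (hu j)
                (hd0 _ _) (hd0 _ _)
        _ = ((4:ℝ) ^ μ) ^ p := by
            rw [Finset.prod_const, Finset.card_univ, Fintype.card_fin]
    have hPB : (∏ k : Fin p, (d (b k₀) (b (k₀.succAbove k)) + δ) ^ μ)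
          * (∏ j : Fin p, (d (b (k₀.succAbove j)) (b k₀) + δ) ^ μ)
          * (∏ k : Fin p, (d (a j₀) (b (k₀.succAbove k)) + δ) ^ (-μ)) ^ 2
        ≤ ((4 : ℝ) ^ μ) ^ p := by
      rw [← Finset.prod_pow, ← Finset.prod_mul_distrib, ← Finset.prod_mul_distrib]
      calc _ ≤ ∏ _k : Fin p, (4:ℝ) ^ μ := by
            apply Finset.prod_le_prod
            · intro k _
              exact mul_nonneg (mul_nonneg (Real.rpow_nonneg (hg _ _).le μ)
                (Real.rpow_nonneg (hg _ _).le μ)) (sq_nonneg _)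
            · intro k _
              exact keybd _ _ _ (hg (a j₀) (b (k₀.succAbove k))) (hv' k) (hv k)
                (hd0 _ _) (hd0 _ _)
        _ = ((4:ℝ) ^ μ) ^ p := by
            rw [Finset.prod_const, Finset.card_univ, Fintype.card_fin]
    -- induction hypothesis on restricted families
    have hrec' : (∏ j : Fin p, ∏ k : Fin p,
          if j = k then 1 else (d (a (j₀.succAbove j)) (a (j₀.succAbove k)) + δ) ^ μ) *
        (∏ j : Fin p, ∏ k : Fin p,
          if j = k then 1 else (d (b (k₀.succAbove j)) (b (k₀.succAbove k)) + δ) ^ μ) *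
        (∏ j : Fin p, ∏ k : Fin p, (d (a (j₀.succAbove j)) (b (k₀.succAbove k)) + δ) ^ (-μ)) ^ 2
        ≤ C * (⨆ τ' : Equiv.Perm (Fin p),
            ∏ j : Fin p, (d (b (k₀.succAbove j)) (a (j₀.succAbove (τ' j))) + δ) ^ (-μ)) ^ 2 :=
      hrec δ hδ (fun j => a (j₀.succAbove j)) (fun k => b (k₀.succAbove k))
    -- extended permutation
    obtain ⟨τ'₀, hτ'₀⟩ := exists_eq_ciSup_of_finite
      (f := fun τ' : Equiv.Perm (Fin p) =>
        ∏ j : Fin p, (d (b (k₀.succAbove j)) (a (j₀.succAbove (τ' j))) + δ) ^ (-μ))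
    set τ : Equiv.Perm (Fin (p + 1)) :=
      (finSuccEquiv' k₀).trans ((Equiv.optionCongr τ'₀).trans (finSuccEquiv' j₀).symm) with hτ
    have hτk₀ : τ k₀ = j₀ := by
      simp [hτ, finSuccEquiv'_at, finSuccEquiv'_symm_none]
    have hτsb : ∀ i : Fin p, τ (k₀.succAbove i) = j₀.succAbove (τ'₀ i) := by
      intro i
      simp [hτ, finSuccEquiv'_succAbove, finSuccEquiv'_symm_some]
    have hMτ : (∏ j : Fin (p + 1), (d (b j) (a (τ j)) + δ) ^ (-μ))
        = (d (a j₀) (b k₀) + δ) ^ (-μ)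
          * ∏ i : Fin p, (d (b (k₀.succAbove i)) (a (j₀.succAbove (τ'₀ i))) + δ) ^ (-μ) := by
      rw [Fin.prod_univ_succAbove (fun j => (d (b j) (a (τ j)) + δ) ^ (-μ)) k₀, hτk₀,
        hsymm (b k₀) (a j₀)]
      congr 1
      exact Finset.prod_congr rfl fun i _ => by rw [hτsb i]
    have hle : (d (a j₀) (b k₀) + δ) ^ (-μ)
          * (⨆ τ' : Equiv.Perm (Fin p),
              ∏ j : Fin p, (d (b (k₀.succAbove j)) (a (j₀.succAbove (τ' j))) + δ) ^ (-μ))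
        ≤ ⨆ σ : Equiv.Perm (Fin (p + 1)),
            ∏ j : Fin (p + 1), (d (b j) (a (σ j)) + δ) ^ (-μ) := by
      rw [← hτ'₀, ← hMτ]
      exact le_ciSup (f := fun σ : Equiv.Perm (Fin (p + 1)) =>
        ∏ j : Fin (p + 1), (d (b j) (a (σ j)) + δ) ^ (-μ)) (Finite.bddAbove_range _) τ
    have hS'nonneg : 0 ≤ ⨆ τ' : Equiv.Perm (Fin p),
        ∏ j : Fin p, (d (b (k₀.succAbove j)) (a (j₀.succAbove (τ' j))) + δ) ^ (-μ) := by
      rw [← hτ'₀]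
      exact Finset.prod_nonneg fun i _ => Real.rpow_nonneg (hg _ _).le _
    -- finish
    rw [hA, hB, hX]
    have hpp : ((4:ℝ) ^ μ) ^ p * ((4:ℝ) ^ μ) ^ p = ((4:ℝ) ^ μ) ^ (2 * p) := by
      rw [← pow_add, two_mul]
    refine le_trans (final_algebra _ _ _ _ _ _ _ _ _ _ _ _ C (((4:ℝ) ^ μ) ^ p)
      hC (by positivity) ?_ ?_ ?_ ?_ ?_ ?_ hrec' hPA hPB hle) (le_of_eq ?_)
    · exact Finset.prod_nonneg fun k _ => Real.rpow_nonneg (hg _ _).le _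
    · exact Finset.prod_nonneg fun k _ => Real.rpow_nonneg (hg _ _).le _
    · exact Finset.prod_nonneg fun k _ => Real.rpow_nonneg (hg _ _).le _
    · exact Finset.prod_nonneg fun k _ => Real.rpow_nonneg (hg _ _).le _
    · exact Real.rpow_nonneg hg₀.le _
    · exact hS'nonneg
    · rw [hpp]

end Key

lemma sq_prod_pairs {n : ℕ} (F : Fin n → Fin n → ℝ) (hF : ∀ x y, F x y = F y x) :
    (∏ q ∈ Finset.univ.filter (fun q : Fin n × Fin n => q.1 < q.2), F q.1 q.2) ^ 2
      = ∏ x, ∏ y, if x = y then 1 else F x y := by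
  have h1 : (∏ q : Fin n × Fin n, if q.1 = q.2 then (1:ℝ) else F q.1 q.2)
      = ∏ x, ∏ y, if x = y then 1 else F x y :=
    Fintype.prod_prod_type _
  have h2 : (∏ q : Fin n × Fin n, if q.1 = q.2 then (1:ℝ) else F q.1 q.2)
      = ∏ q ∈ Finset.univ.filter (fun q : Fin n × Fin n => ¬ q.1 = q.2), F q.1 q.2 := by
    rw [Finset.prod_filter]
    exact Finset.prod_congr rfl fun q _ => by by_cases h : q.1 = q.2 <;> simp [h]
  have h3 : Finset.univ.filter (fun q : Fin n × Fin n => ¬ q.1 = q.2)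
      = Finset.univ.filter (fun q : Fin n × Fin n => q.1 < q.2)
        ∪ Finset.univ.filter (fun q : Fin n × Fin n => q.2 < q.1) := by
    ext q
    simp only [Finset.mem_filter, Finset.mem_union, Finset.mem_univ, true_and]
    constructor
    · intro h; exact lt_or_gt_of_ne h
    · rintro (h | h)
      · exact ne_of_lt h
      · exact (ne_of_lt h).symm
  have hdisj : Disjoint (Finset.univ.filter (fun q : Fin n × Fin n => q.1 < q.2))
      (Finset.univ.filter (fun q : Fin n × Fin n => q.2 < q.1)) := by
    rw [Finset.disjoint_left]
    intro q hq hq'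
    simp only [Finset.mem_filter] at hq hq'
    exact absurd hq'.2 (not_lt_of_gt hq.2)
  have h4 : (∏ q ∈ Finset.univ.filter (fun q : Fin n × Fin n => q.2 < q.1), F q.1 q.2)
      = ∏ q ∈ Finset.univ.filter (fun q : Fin n × Fin n => q.1 < q.2), F q.1 q.2 := by
    refine Finset.prod_nbij' Prod.swap Prod.swap ?_ ?_ ?_ ?_ ?_
    · intro q hq; simp only [Finset.mem_filter, Finset.mem_univ, true_and] at *; exact hq
    · intro q hq; simp only [Finset.mem_filter, Finset.mem_univ, true_and] at *; exact hq
    · intro q _; rfl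
    · intro q _; rfl
    · intro q _; exact hF q.1 q.2
  rw [← h1, h2, h3, Finset.prod_union hdisj, h4, sq]


lemma interleave_even_lt {p : ℕ} (j : Fin p) : 2 * (j : ℕ) < 2 * p := by
  have := j.isLt; omega
lemma interleave_odd_lt {p : ℕ} (j : Fin p) : 2 * (j : ℕ) + 1 < 2 * p := by
  have := j.isLt; omega

noncomputable def interleave (p : ℕ) : Fin p ⊕ Fin p ≃ Fin (2 * p) :=
  Equiv.ofBijective
    (Sum.elim (fun j => (⟨2 * (j : ℕ), interleave_even_lt j⟩ : Fin (2 * p)))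
      (fun j => ⟨2 * (j : ℕ) + 1, interleave_odd_lt j⟩))
    (by
      constructor
      · rintro (a | a) (b | b) h <;>
          simp only [Sum.elim_inl, Sum.elim_inr, Fin.mk.injEq] at h
        · exact congrArg _ (Fin.ext (by omega))
        · exact absurd h (by omega)
        · exact absurd h (by omega)
        · exact congrArg _ (Fin.ext (by omega))
      · rintro ⟨i, hi⟩
        by_cases h : i % 2 = 0
        · refine ⟨Sum.inl ⟨i / 2, by omega⟩, Fin.ext ?_⟩
          show 2 * (i / 2) = i
          omega
        · refine ⟨Sum.inr ⟨i / 2, by omega⟩, Fin.ext ?_⟩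
          show 2 * (i / 2) + 1 = i
          omega)
lemma interleave_inl_val (p : ℕ) (j : Fin p) :
    ((interleave p (Sum.inl j) : Fin (2 * p)) : ℕ) = 2 * (j : ℕ) := rfl
lemma interleave_inr_val (p : ℕ) (j : Fin p) :
    ((interleave p (Sum.inr j) : Fin (2 * p)) : ℕ) = 2 * (j : ℕ) + 1 := rfl


/-- Lemma 2.6 / `LEM:prod`: for `λ > 0` and `p ∈ ℕ` there is a constant
`C = C(p, λ) > 0` such that for every `N ≥ 1` and all points `y₁, …, y_{2p} ∈ T²`:
`∏_{1 ≤ j < k ≤ 2p} (|y_j − y_k| + N⁻¹)^{ε_j ε_k λ}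
   ≤ C · max_{τ ∈ S_p} ∏_{j=1}^p (|y_{2j} − y_{2τ(j)−1}| + N⁻¹)^{−λ}`. -/
theorem charge_cancellation_product_estimate (lam : ℝ) (hlam : 0 < lam) (p : ℕ) :
    ∃ C : ℝ, 0 < C ∧ ∀ N : ℕ, 1 ≤ N → ∀ y : Fin (2 * p) → ℝ × ℝ,
      (∏ q ∈ Finset.univ.filter (fun q : Fin (2 * p) × Fin (2 * p) => q.1 < q.2),
          (torusDist2 (y q.1) (y q.2) + (N : ℝ)⁻¹) ^ (charge q.1 * charge q.2 * lam))
        ≤ C * ⨆ τ : Equiv.Perm (Fin p), ∏ j : Fin p,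
            (torusDist2 (y ⟨2 * (j : ℕ) + 1, by have := j.isLt; omega⟩)
                (y ⟨2 * ((τ j : Fin p) : ℕ), by have := (τ j).isLt; omega⟩)
              + (N : ℝ)⁻¹) ^ (-lam) := by
  obtain ⟨CK, hCK, hK⟩ := key_lemma torusDist2 torusDist2_nonneg torusDist2_symm
    torusDist2_triangle lam hlam p
  refine ⟨Real.sqrt CK, Real.sqrt_pos.mpr hCK, ?_⟩
  intro N hN y
  have hNR : (0:ℝ) < (N:ℝ) := by exact_mod_cast Nat.lt_of_lt_of_le Nat.zero_lt_one hN
  have hδ : (0:ℝ) < (N:ℝ)⁻¹ := by positivity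
  set δ := (N:ℝ)⁻¹ with hδdef
  -- shorthands
  have hd : ∀ u v : ℝ × ℝ, 0 < torusDist2 u v + δ :=
    fun u v => add_pos_of_nonneg_of_pos (torusDist2_nonneg u v) hδ
  have hil_ne_ir : ∀ j k : Fin p, interleave p (Sum.inl j) ≠ interleave p (Sum.inr k) := by
    intro j k h
    have := congrArg Fin.val h
    rw [interleave_inl_val, interleave_inr_val] at this
    omega
  have hil_inj : ∀ j k : Fin p,
      (interleave p (Sum.inl j) = interleave p (Sum.inl k)) ↔ j = k := by
    intro j k
    rw [Equiv.apply_eq_iff_eq, Sum.inl.injEq]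
  have hir_inj : ∀ j k : Fin p,
      (interleave p (Sum.inr j) = interleave p (Sum.inr k)) ↔ j = k := by
    intro j k
    rw [Equiv.apply_eq_iff_eq, Sum.inr.injEq]
  have hch_il : ∀ j : Fin p, charge (interleave p (Sum.inl j)) = -1 := by
    intro j
    have hv : ((interleave p (Sum.inl j) : Fin (2*p)) : ℕ) % 2 = 0 := by
      rw [interleave_inl_val]; omega
    rw [charge, if_neg (by omega)]
  have hch_ir : ∀ j : Fin p, charge (interleave p (Sum.inr j)) = 1 := by
    intro j
    have hv : ((interleave p (Sum.inr j) : Fin (2*p)) : ℕ) % 2 = 1 := by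
      rw [interleave_inr_val]; omega
    rw [charge, if_pos hv]
  -- squaring the left-hand side
  have hF : ∀ x z : Fin (2*p),
      (torusDist2 (y x) (y z) + δ) ^ (charge x * charge z * lam)
        = (torusDist2 (y z) (y x) + δ) ^ (charge z * charge x * lam) := by
    intro x z
    rw [torusDist2_symm (y x) (y z), mul_comm (charge x) (charge z)]
  have hsq1 : (∏ q ∈ Finset.univ.filter (fun q : Fin (2 * p) × Fin (2 * p) => q.1 < q.2),
        (torusDist2 (y q.1) (y q.2) + δ) ^ (charge q.1 * charge q.2 * lam)) ^ 2
      = ∏ x, ∏ z, if x = z then 1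
          else (torusDist2 (y x) (y z) + δ) ^ (charge x * charge z * lam) :=
    sq_prod_pairs (fun x z => (torusDist2 (y x) (y z) + δ) ^ (charge x * charge z * lam)) hF
  -- split the double product into the four charge blocks
  have e1 : ∀ h : Fin (2*p) → ℝ, (∏ x, h x)
      = (∏ j : Fin p, h (interleave p (Sum.inl j)))
        * ∏ j : Fin p, h (interleave p (Sum.inr j)) := by
    intro h
    rw [← Equiv.prod_comp (interleave p) h, Fintype.prod_sum_type]
  have s1 : (∏ x, ∏ z, if x = z then (1:ℝ)
        else (torusDist2 (y x) (y z) + δ) ^ (charge x * charge z * lam))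
      = ((∏ j : Fin p, ∏ k : Fin p, if interleave p (Sum.inl j) = interleave p (Sum.inl k)
            then 1 else (torusDist2 (y (interleave p (Sum.inl j))) (y (interleave p (Sum.inl k))) + δ)
              ^ (charge (interleave p (Sum.inl j)) * charge (interleave p (Sum.inl k)) * lam))
          * ∏ j : Fin p, ∏ k : Fin p, if interleave p (Sum.inl j) = interleave p (Sum.inr k)
            then 1 else (torusDist2 (y (interleave p (Sum.inl j))) (y (interleave p (Sum.inr k))) + δ)
              ^ (charge (interleave p (Sum.inl j)) * charge (interleave p (Sum.inr k)) * lam))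
        * ((∏ j : Fin p, ∏ k : Fin p, if interleave p (Sum.inr j) = interleave p (Sum.inl k)
            then 1 else (torusDist2 (y (interleave p (Sum.inr j))) (y (interleave p (Sum.inl k))) + δ)
              ^ (charge (interleave p (Sum.inr j)) * charge (interleave p (Sum.inl k)) * lam))
          * ∏ j : Fin p, ∏ k : Fin p, if interleave p (Sum.inr j) = interleave p (Sum.inr k)
            then 1 else (torusDist2 (y (interleave p (Sum.inr j))) (y (interleave p (Sum.inr k))) + δ)
              ^ (charge (interleave p (Sum.inr j)) * charge (interleave p (Sum.inr k)) * lam)) := by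
    rw [e1 (fun x => ∏ z, if x = z then (1:ℝ)
      else (torusDist2 (y x) (y z) + δ) ^ (charge x * charge z * lam))]
    congr 1
    · rw [Finset.prod_congr rfl (fun j _ => e1 (fun z =>
        if interleave p (Sum.inl j) = z then (1:ℝ)
        else (torusDist2 (y (interleave p (Sum.inl j))) (y z) + δ)
          ^ (charge (interleave p (Sum.inl j)) * charge z * lam))), Finset.prod_mul_distrib]
    · rw [Finset.prod_congr rfl (fun j _ => e1 (fun z =>
        if interleave p (Sum.inr j) = z then (1:ℝ)
        else (torusDist2 (y (interleave p (Sum.inr j))) (y z) + δ)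
          ^ (charge (interleave p (Sum.inr j)) * charge z * lam))), Finset.prod_mul_distrib]
  -- evaluate the four blocks
  have hb1 : (∏ j : Fin p, ∏ k : Fin p, if interleave p (Sum.inl j) = interleave p (Sum.inl k)
        then (1:ℝ) else (torusDist2 (y (interleave p (Sum.inl j))) (y (interleave p (Sum.inl k))) + δ)
          ^ (charge (interleave p (Sum.inl j)) * charge (interleave p (Sum.inl k)) * lam))
      = ∏ j : Fin p, ∏ k : Fin p, if j = k then 1
          else (torusDist2 (y (interleave p (Sum.inl j))) (y (interleave p (Sum.inl k))) + δ) ^ lam := by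
    refine Finset.prod_congr rfl fun j _ => Finset.prod_congr rfl fun k _ => ?_
    by_cases h : j = k
    · subst h; simp
    · rw [if_neg (fun hc => h ((hil_inj j k).mp hc)), if_neg h, hch_il, hch_il]
      norm_num
  have hb4 : (∏ j : Fin p, ∏ k : Fin p, if interleave p (Sum.inr j) = interleave p (Sum.inr k)
        then (1:ℝ) else (torusDist2 (y (interleave p (Sum.inr j))) (y (interleave p (Sum.inr k))) + δ)
          ^ (charge (interleave p (Sum.inr j)) * charge (interleave p (Sum.inr k)) * lam))
      = ∏ j : Fin p, ∏ k : Fin p, if j = k then 1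
          else (torusDist2 (y (interleave p (Sum.inr j))) (y (interleave p (Sum.inr k))) + δ) ^ lam := by
    refine Finset.prod_congr rfl fun j _ => Finset.prod_congr rfl fun k _ => ?_
    by_cases h : j = k
    · subst h; simp
    · rw [if_neg (fun hc => h ((hir_inj j k).mp hc)), if_neg h, hch_ir, hch_ir]
      norm_num
  have hb2 : (∏ j : Fin p, ∏ k : Fin p, if interleave p (Sum.inl j) = interleave p (Sum.inr k)
        then (1:ℝ) else (torusDist2 (y (interleave p (Sum.inl j))) (y (interleave p (Sum.inr k))) + δ)
          ^ (charge (interleave p (Sum.inl j)) * charge (interleave p (Sum.inr k)) * lam))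
      = ∏ j : Fin p, ∏ k : Fin p,
          (torusDist2 (y (interleave p (Sum.inl j))) (y (interleave p (Sum.inr k))) + δ) ^ (-lam) := by
    refine Finset.prod_congr rfl fun j _ => Finset.prod_congr rfl fun k _ => ?_
    rw [if_neg (hil_ne_ir j k), hch_il, hch_ir]
    norm_num
  have hb3 : (∏ j : Fin p, ∏ k : Fin p, if interleave p (Sum.inr j) = interleave p (Sum.inl k)
        then (1:ℝ) else (torusDist2 (y (interleave p (Sum.inr j))) (y (interleave p (Sum.inl k))) + δ)
          ^ (charge (interleave p (Sum.inr j)) * charge (interleave p (Sum.inl k)) * lam))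
      = ∏ j : Fin p, ∏ k : Fin p,
          (torusDist2 (y (interleave p (Sum.inl j))) (y (interleave p (Sum.inr k))) + δ) ^ (-lam) := by
    have step : (∏ j : Fin p, ∏ k : Fin p, if interleave p (Sum.inr j) = interleave p (Sum.inl k)
          then (1:ℝ) else (torusDist2 (y (interleave p (Sum.inr j))) (y (interleave p (Sum.inl k))) + δ)
            ^ (charge (interleave p (Sum.inr j)) * charge (interleave p (Sum.inl k)) * lam))
        = ∏ j : Fin p, ∏ k : Fin p,
            (torusDist2 (y (interleave p (Sum.inl k))) (y (interleave p (Sum.inr j))) + δ) ^ (-lam) := by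
      refine Finset.prod_congr rfl fun j _ => Finset.prod_congr rfl fun k _ => ?_
      rw [if_neg (fun hc => hil_ne_ir k j hc.symm), hch_ir, hch_il,
        torusDist2_symm (y (interleave p (Sum.inr j))) (y (interleave p (Sum.inl k)))]
      norm_num
    rw [step]
    exact Finset.prod_comm
  -- apply the key lemma
  have hKey : (∏ j : Fin p, ∏ k : Fin p, if j = k then 1
        else (torusDist2 (y (interleave p (Sum.inl j))) (y (interleave p (Sum.inl k))) + δ) ^ lam) *
      (∏ j : Fin p, ∏ k : Fin p, if j = k then 1
        else (torusDist2 (y (interleave p (Sum.inr j))) (y (interleave p (Sum.inr k))) + δ) ^ lam) *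
      (∏ j : Fin p, ∏ k : Fin p,
        (torusDist2 (y (interleave p (Sum.inl j))) (y (interleave p (Sum.inr k))) + δ) ^ (-lam)) ^ 2
      ≤ CK * (⨆ τ : Equiv.Perm (Fin p), ∏ j : Fin p,
          (torusDist2 (y (interleave p (Sum.inr j))) (y (interleave p (Sum.inl (τ j)))) + δ)
            ^ (-lam)) ^ 2 :=
    hK δ hδ (fun j => y (interleave p (Sum.inl j))) (fun j => y (interleave p (Sum.inr j)))
  -- identify the supremum with the one in the statement
  have hSup : (⨆ τ : Equiv.Perm (Fin p), ∏ j : Fin p,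
        (torusDist2 (y (interleave p (Sum.inr j))) (y (interleave p (Sum.inl (τ j)))) + δ)
          ^ (-lam))
      = ⨆ τ : Equiv.Perm (Fin p), ∏ j : Fin p,
          (torusDist2 (y ⟨2 * (j : ℕ) + 1, by have := j.isLt; omega⟩)
              (y ⟨2 * ((τ j : Fin p) : ℕ), by have := (τ j).isLt; omega⟩) + δ) ^ (-lam) := by
    congr 1
  -- put everything together
  have hfin : (∏ q ∈ Finset.univ.filter (fun q : Fin (2 * p) × Fin (2 * p) => q.1 < q.2),
        (torusDist2 (y q.1) (y q.2) + δ) ^ (charge q.1 * charge q.2 * lam)) ^ 2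
      ≤ CK * (⨆ τ : Equiv.Perm (Fin p), ∏ j : Fin p,
          (torusDist2 (y ⟨2 * (j : ℕ) + 1, by have := j.isLt; omega⟩)
              (y ⟨2 * ((τ j : Fin p) : ℕ), by have := (τ j).isLt; omega⟩) + δ) ^ (-lam)) ^ 2 := by
    rw [hsq1, s1, hb1, hb2, hb3, hb4, ← hSup]
    calc _ = (∏ j : Fin p, ∏ k : Fin p, if j = k then (1:ℝ)
          else (torusDist2 (y (interleave p (Sum.inl j))) (y (interleave p (Sum.inl k))) + δ) ^ lam) *
        (∏ j : Fin p, ∏ k : Fin p, if j = k then 1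
          else (torusDist2 (y (interleave p (Sum.inr j))) (y (interleave p (Sum.inr k))) + δ) ^ lam) *
        (∏ j : Fin p, ∏ k : Fin p,
          (torusDist2 (y (interleave p (Sum.inl j))) (y (interleave p (Sum.inr k))) + δ) ^ (-lam)) ^ 2 := by
          ring
      _ ≤ _ := hKey
  -- extract square roots
  have hL0 : 0 ≤ ∏ q ∈ Finset.univ.filter (fun q : Fin (2 * p) × Fin (2 * p) => q.1 < q.2),
      (torusDist2 (y q.1) (y q.2) + δ) ^ (charge q.1 * charge q.2 * lam) :=
    Finset.prod_nonneg fun q _ => Real.rpow_nonneg (hd _ _).le _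
  have hS0 : 0 ≤ ⨆ τ : Equiv.Perm (Fin p), ∏ j : Fin p,
      (torusDist2 (y ⟨2 * (j : ℕ) + 1, by have := j.isLt; omega⟩)
          (y ⟨2 * ((τ j : Fin p) : ℕ), by have := (τ j).isLt; omega⟩) + δ) ^ (-lam) := by
    refine le_trans (Finset.prod_nonneg fun j _ => Real.rpow_nonneg (hd _ _).le _)
      (le_ciSup (f := fun τ : Equiv.Perm (Fin p) => ∏ j : Fin p,
        (torusDist2 (y ⟨2 * (j : ℕ) + 1, by have := j.isLt; omega⟩)
            (y ⟨2 * ((τ j : Fin p) : ℕ), by have := (τ j).isLt; omega⟩) + δ) ^ (-lam))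
        (Finite.bddAbove_range _) (1 : Equiv.Perm (Fin p)))
  calc (∏ q ∈ Finset.univ.filter (fun q : Fin (2 * p) × Fin (2 * p) => q.1 < q.2),
        (torusDist2 (y q.1) (y q.2) + δ) ^ (charge q.1 * charge q.2 * lam))
      = Real.sqrt ((∏ q ∈ Finset.univ.filter (fun q : Fin (2 * p) × Fin (2 * p) => q.1 < q.2),
          (torusDist2 (y q.1) (y q.2) + δ) ^ (charge q.1 * charge q.2 * lam)) ^ 2) :=
        (Real.sqrt_sq hL0).symm
    _ ≤ Real.sqrt (CK * (⨆ τ : Equiv.Perm (Fin p), ∏ j : Fin p,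
          (torusDist2 (y ⟨2 * (j : ℕ) + 1, by have := j.isLt; omega⟩)
              (y ⟨2 * ((τ j : Fin p) : ℕ), by have := (τ j).isLt; omega⟩) + δ) ^ (-lam)) ^ 2) :=
        Real.sqrt_le_sqrt hfin
    _ = Real.sqrt CK * ⨆ τ : Equiv.Perm (Fin p), ∏ j : Fin p,
          (torusDist2 (y ⟨2 * (j : ℕ) + 1, by have := j.isLt; omega⟩)
              (y ⟨2 * ((τ j : Fin p) : ℕ), by have := (τ j).isLt; omega⟩) + δ) ^ (-lam) := by
        rw [Real.sqrt_mul hCK.le, Real.sqrt_sq hS0]
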